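/- Let n ≥ 2 and suppose X_1, …, X_h ∈ R satisfy f^{(n)}(X_i) = 0 for all i. Then g(μ_n(X_1, …, X_h)) = μ_{n−1}(f(X_1), …, f(X_h)). -/

import Mathlib

open Finset

noncomputable section

/-- The Moore determinant `μ(X₁, …, X_h) = det (Xᵢ^{q^{j-1}})`. -/
def moore (q : ℕ) {h : ℕ} {R : Type*} [CommRing R] (X : Fin h → R) : R :=
  Matrix.det (Matrix.of fun i j : Fin h => X i ^ q ^ (j : ℕ))

/-- `f(X) = πX + u₁X^q + ⋯ + u_{h−1}X^{q^{h−1}} + X^{q^h}`. -/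
def fmap (q h : ℕ) {R : Type*} [CommRing R] (π : R) (u : ℕ → R) (X : R) : R :=
  π * X + (∑ k ∈ Finset.Ico 1 h, u k * X ^ q ^ k) + X ^ q ^ h

/-- `μ_n(X₁, …, X_h) = Σ μ(f^(a₁)(X₁), …, f^(a_h)(X_h))`, the sum over all tuples
`(a₁, …, a_h)` with `0 ≤ aᵢ ≤ n−1` and `a₁ + ⋯ + a_h = (h−1)(n−1)`. -/
def mooreN (q h n : ℕ) {R : Type*} [CommRing R] (π : R) (u : ℕ → R) (X : Fin h → R) : R :=
  ∑ a ∈ Finset.univ.filter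
      (fun a : Fin h → Fin n => ∑ i, (a i : ℕ) = (h - 1) * (n - 1)),
    moore q (fun i => (fmap q h π u)^[(a i : ℕ)] (X i))

/-- `g(T) = πT + (−1)^{h−1}T^q`. -/
def gmap (q h : ℕ) {R : Type*} [CommRing R] (π : R) (T : R) : R :=
  π * T + (-1) ^ (h - 1) * T ^ q

/-- If one coordinate of a constrained tuple is `< n-1`, every other coordinate is `≥ 1`. -/
private lemma ge_one_aux {h n : ℕ} (a : Fin h → Fin n)
    (ha : ∑ i, (a i : ℕ) = (h - 1) * (n - 1)) {j0 j : Fin h}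
    (hj0 : (a j0 : ℕ) < n - 1) (hjj : j ≠ j0) : 1 ≤ (a j : ℕ) := by
  by_contra h0
  have h0' : (a j : ℕ) = 0 := by omega
  have hsub := Finset.add_sum_erase Finset.univ (fun i => (a i : ℕ)) (Finset.mem_univ j)
  have hlt : ∑ i ∈ Finset.univ.erase j, (a i : ℕ)
      < ∑ _i ∈ Finset.univ.erase j, (n - 1) := by
    refine Finset.sum_lt_sum (fun i _ => ?_)
      ⟨j0, Finset.mem_erase.2 ⟨Ne.symm hjj, Finset.mem_univ _⟩, hj0⟩
    have := (a i).isLt; omega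
  rw [Finset.sum_const, smul_eq_mul, Finset.card_erase_of_mem (Finset.mem_univ j),
    Finset.card_univ, Fintype.card_fin] at hlt
  omega

private lemma sum_shift {h : ℕ} (c d : Fin h → ℕ) (j0 : Fin h)
    (h0 : c j0 = d j0) (h1 : ∀ j, j ≠ j0 → c j = d j + 1) :
    ∑ j, c j = (∑ j, d j) + (h - 1) := by
  have hc := Finset.add_sum_erase Finset.univ c (Finset.mem_univ j0)
  have hd := Finset.add_sum_erase Finset.univ d (Finset.mem_univ j0)
  have he : ∑ j ∈ Finset.univ.erase j0, c j
      = ∑ j ∈ Finset.univ.erase j0, (d j + 1) :=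
    Finset.sum_congr rfl fun j hj => h1 j (Finset.mem_erase.1 hj).1
  rw [Finset.sum_add_distrib, Finset.sum_const, smul_eq_mul, mul_one,
    Finset.card_erase_of_mem (Finset.mem_univ j0), Finset.card_univ, Fintype.card_fin] at he
  omega

/-- The key combinatorial reindexing lemma, for a fixed permutation `τ`. -/
private lemma keyB {R : Type*} [CommRing R] {h n : ℕ} [NeZero h] (hn : 2 ≤ n)
    (τ : Equiv.Perm (Fin h)) (v : Fin h → ℕ → R) (hv : v 0 n = 0) :
    ∑ a ∈ Finset.univ.filter
        (fun a : Fin h → Fin n => ∑ i, (a i : ℕ) = (h - 1) * (n - 1)),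
      ∏ i, v i ((a (τ i) : ℕ) + if i = 0 then 1 else 0)
      = ∑ b ∈ Finset.univ.filter
        (fun b : Fin h → Fin (n - 1) => ∑ i, (b i : ℕ) = (h - 1) * (n - 2)),
      ∏ i, v i ((b (τ i) : ℕ) + 1) := by
  classical
  set A := Finset.univ.filter
      (fun a : Fin h → Fin n => ∑ i, (a i : ℕ) = (h - 1) * (n - 1)) with hA
  set B := Finset.univ.filter
      (fun b : Fin h → Fin (n - 1) => ∑ i, (b i : ℕ) = (h - 1) * (n - 2)) with hB
  set A' := A.filter (fun a => (a (τ 0) : ℕ) < n - 1) with hA'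
  have hstep1 : ∑ a ∈ A, ∏ i, v i ((a (τ i) : ℕ) + if i = 0 then 1 else 0)
      = ∑ a ∈ A', ∏ i, v i ((a (τ i) : ℕ) + if i = 0 then 1 else 0) := by
    rw [hA']
    refine (Finset.sum_filter_of_ne ?_).symm
    intro a haA hne
    by_contra hlt
    apply hne
    refine Finset.prod_eq_zero (Finset.mem_univ (0 : Fin h)) ?_
    have : (a (τ 0) : ℕ) = n - 1 := by
      have := (a (τ 0)).isLt; omega
    have hval : (a (τ 0) : ℕ) + (if (0 : Fin h) = 0 then 1 else 0) = n := by
      rw [if_pos rfl]; omega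
    rw [hval, hv]
  rw [hstep1]
  -- now a bijection between A' and B
  have fwdlt : ∀ a ∈ A', ∀ j : Fin h,
      (if j = τ 0 then (a j : ℕ) else (a j : ℕ) - 1) < n - 1 := by
    intro a ha j
    have hmem := Finset.mem_filter.1 ha
    have hmem2 := Finset.mem_filter.1 hmem.1
    by_cases hj : j = τ 0
    · rw [if_pos hj, hj]; exact hmem.2
    · have h1 : 1 ≤ (a j : ℕ) := ge_one_aux a hmem2.2 hmem.2 hj
      have := (a j).isLt
      rw [if_neg hj]; omega
  have bwdlt : ∀ b : Fin h → Fin (n - 1), ∀ j : Fin h,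
      (if j = τ 0 then (b j : ℕ) else (b j : ℕ) + 1) < n := by
    intro b j
    have := (b j).isLt
    by_cases hj : j = τ 0
    · rw [if_pos hj]; omega
    · rw [if_neg hj]; omega
  have hmul : (h - 1) * (n - 1) = (h - 1) * (n - 2) + (h - 1) := by
    have hn' : n - 1 = (n - 2) + 1 := by omega
    rw [hn', Nat.mul_succ]
  refine Finset.sum_bij'
    (i := fun a ha => fun j => (⟨if j = τ 0 then (a j : ℕ) else (a j : ℕ) - 1,
      fwdlt a ha j⟩ : Fin (n - 1)))
    (j := fun b _ => fun j => (⟨if j = τ 0 then (b j : ℕ) else (b j : ℕ) + 1,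
      bwdlt b j⟩ : Fin n)) ?_ ?_ ?_ ?_ ?_
  · -- forward membership
    intro a ha
    have hmem := Finset.mem_filter.1 ha
    have hmem2 := Finset.mem_filter.1 hmem.1
    rw [hB, Finset.mem_filter]
    refine ⟨Finset.mem_univ _, ?_⟩
    show (∑ j, (if j = τ 0 then (a j : ℕ) else (a j : ℕ) - 1)) = (h - 1) * (n - 2)
    have hsum : ∑ j, (a j : ℕ)
        = (∑ j, (if j = τ 0 then (a j : ℕ) else (a j : ℕ) - 1)) + (h - 1) := by
      refine sum_shift _ _ (τ 0) (by simp) ?_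
      intro j hj
      have h1 : 1 ≤ (a j : ℕ) := ge_one_aux a hmem2.2 hmem.2 hj
      rw [if_neg hj]
      omega
    have htot := hmem2.2
    omega
  · -- backward membership
    intro b hb
    have hmem := Finset.mem_filter.1 hb
    rw [hA', Finset.mem_filter, hA, Finset.mem_filter]
    have hsum : ∑ j, (if j = τ 0 then (b j : ℕ) else (b j : ℕ) + 1)
        = (∑ j, (b j : ℕ)) + (h - 1) := by
      refine sum_shift _ _ (τ 0) (by simp) ?_
      intro j hj
      rw [if_neg hj]
    refine ⟨⟨Finset.mem_univ _, ?_⟩, ?_⟩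
    · show (∑ j, (if j = τ 0 then (b j : ℕ) else (b j : ℕ) + 1)) = (h - 1) * (n - 1)
      rw [hsum, hmem.2, hmul]
    · show (if τ 0 = τ 0 then ((b (τ 0) : ℕ)) else (b (τ 0) : ℕ) + 1) < n - 1
      rw [if_pos rfl]
      exact (b (τ 0)).isLt
  · -- left inverse
    intro a ha
    have hmem := Finset.mem_filter.1 ha
    have hmem2 := Finset.mem_filter.1 hmem.1
    funext j
    apply Fin.ext
    show (if j = τ 0 then (if j = τ 0 then (a j : ℕ) else (a j : ℕ) - 1)
        else (if j = τ 0 then (a j : ℕ) else (a j : ℕ) - 1) + 1) = (a j : ℕ)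
    by_cases hj : j = τ 0
    · rw [if_pos hj, if_pos hj]
    · have h1 : 1 ≤ (a j : ℕ) := ge_one_aux a hmem2.2 hmem.2 hj
      rw [if_neg hj, if_neg hj]
      omega
  · -- right inverse
    intro b hb
    funext j
    apply Fin.ext
    show (if j = τ 0 then (if j = τ 0 then (b j : ℕ) else (b j : ℕ) + 1)
        else (if j = τ 0 then (b j : ℕ) else (b j : ℕ) + 1) - 1) = (b j : ℕ)
    by_cases hj : j = τ 0
    · rw [if_pos hj, if_pos hj]
    · rw [if_neg hj, if_neg hj]
      omega
  · -- terms agree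
    intro a ha
    have hmem := Finset.mem_filter.1 ha
    have hmem2 := Finset.mem_filter.1 hmem.1
    refine Finset.prod_congr rfl fun i _ => ?_
    congr 1
    show ((a (τ i) : ℕ) + if i = 0 then 1 else 0)
      = (if τ i = τ 0 then ((a (τ i)) : ℕ) else (a (τ i) : ℕ) - 1) + 1
    have hiff : τ i = τ 0 ↔ i = 0 := ⟨fun hc => τ.injective hc, fun hc => by rw [hc]⟩
    by_cases hi : i = 0
    · rw [if_pos hi, if_pos (hiff.2 hi)]
    · have h1 : 1 ≤ (a (τ i) : ℕ) :=
        ge_one_aux a hmem2.2 hmem.2 (fun hc => hi (τ.injective hc))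
      rw [if_neg hi, if_neg (fun hc => hi (hiff.1 hc))]
      omega

/-- Column-operation lemma: `g(μ(Y))` equals the determinant of the matrix whose
first column is `f(Yᵢ)` and whose other columns are `Yᵢ^{q^j}`. -/
private lemma lemA {R : Type*} [CommRing R] (p e q h : ℕ) [Fact (Nat.Prime p)] [CharP R p]
    [NeZero h] (hq : q = p ^ e)
    (π : R) (u : ℕ → R) (Y : Fin h → R) :
    gmap q h π (moore q Y)
      = Matrix.det (Matrix.of fun i j : Fin h =>
          if j = 0 then fmap q h π u (Y i) else Y i ^ q ^ (j : ℕ)) := by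
  haveI : ExpChar R p := .prime Fact.out
  have hphi : ∀ x : R, x ^ q = iterateFrobenius R p e x := fun x => by
    rw [iterateFrobenius_def, ← hq]
  set D : Matrix (Fin h) (Fin h) R := Matrix.of fun i j : Fin h => Y i ^ q ^ (j : ℕ) with hD
  have hM : (Matrix.of fun i j : Fin h =>
        if j = 0 then fmap q h π u (Y i) else Y i ^ q ^ (j : ℕ))
      = D.updateCol 0 (fun i => fmap q h π u (Y i)) := by
    ext i j
    rw [Matrix.updateCol_apply]
    by_cases hj : j = 0 <;> simp [hj, hD]
  rw [hM]
  have hsplit : (fun i => fmap q h π u (Y i))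
      = ((π • fun i => D i 0) + (fun i => ∑ k ∈ Finset.Ico 1 h, u k * Y i ^ q ^ k))
        + (fun i => Y i ^ q ^ h) := by
    funext i
    simp only [Pi.add_apply, Pi.smul_apply, smul_eq_mul, fmap, hD, Matrix.of_apply,
      Fin.val_zero, pow_zero, pow_one]
  rw [hsplit, Matrix.det_updateCol_add, Matrix.det_updateCol_add,
    Matrix.det_updateCol_smul, Matrix.updateCol_eq_self]
  have hmid : Matrix.det (D.updateCol 0
      (fun i => ∑ k ∈ Finset.Ico 1 h, u k * Y i ^ q ^ k)) = 0 := by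
    have main : ∀ s : Finset ℕ, (∀ k ∈ s, 1 ≤ k ∧ k < h) →
        Matrix.det (D.updateCol 0 (fun i => ∑ k ∈ s, u k * Y i ^ q ^ k)) = 0 := by
      intro s
      induction s using Finset.induction_on with
      | empty =>
        intro _
        refine Matrix.det_eq_zero_of_column_eq_zero 0 fun i => ?_
        simp [Matrix.updateCol_self]
      | @insert k s hk ih =>
        intro hks
        have hkh : k < h := (hks k (Finset.mem_insert_self _ _)).2
        have hk1 : 1 ≤ k := (hks k (Finset.mem_insert_self _ _)).1
        have hfun : (fun i => ∑ m ∈ insert k s, u m * Y i ^ q ^ m)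
            = (u k • fun i => D i ⟨k, hkh⟩) + (fun i => ∑ m ∈ s, u m * Y i ^ q ^ m) := by
          funext i
          rw [Finset.sum_insert hk]
          simp [hD]
        rw [hfun, Matrix.det_updateCol_add, Matrix.det_updateCol_smul,
          ih (fun m hm => hks m (Finset.mem_insert_of_mem hm)),
          Matrix.det_updateCol_eq_zero, mul_zero, add_zero]
        exact fun hcon => by
          have : k = 0 := congrArg Fin.val hcon
          omega
    exact main _ fun k hk => by
      have := Finset.mem_Ico.1 hk; exact ⟨this.1, this.2⟩
  rw [hmid]
  have hlast : Matrix.det (D.updateCol 0 (fun i => Y i ^ q ^ h))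
      = (-1 : R) ^ (h - 1) * (Matrix.det D) ^ q := by
    obtain ⟨m, rfl⟩ : ∃ m, h = m + 1 := ⟨h - 1, (Nat.succ_pred_eq_of_pos (NeZero.pos h)).symm⟩
    have hDet : (Matrix.det D) ^ q = Matrix.det (D.map (iterateFrobenius R p e)) := by
      rw [hphi, RingHom.map_det]
      rfl
    have hperm : (D.updateCol 0 (fun i => Y i ^ q ^ (m + 1))).submatrix id
        (finRotate (m + 1)) = D.map (iterateFrobenius R p e) := by
      ext i j
      rw [Matrix.submatrix_apply, Matrix.map_apply, id]
      have hmap : iterateFrobenius R p e (D i j) = Y i ^ q ^ ((j : ℕ) + 1) := by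
        rw [← hphi, hD]
        simp only [Matrix.of_apply, ← pow_mul, ← pow_succ]
      rw [hmap, Matrix.updateCol_apply]
      by_cases hj : j = Fin.last m
      · subst hj
        rw [if_pos finRotate_last]
        simp
      · have hne : finRotate (m + 1) j ≠ 0 := by
          intro hcon
          exact hj ((finRotate (m + 1)).injective (hcon.trans finRotate_last.symm))
        rw [if_neg hne, hD]
        simp only [Matrix.of_apply]
        congr 2
        exact coe_finRotate_of_ne_last hj
    have hdp := Matrix.det_permute' (finRotate (m + 1))
      (D.updateCol 0 (fun i => Y i ^ q ^ (m + 1)))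
    rw [hperm] at hdp
    have hsign : ((Equiv.Perm.sign (finRotate (m + 1)) : ℤ) : R) = (-1 : R) ^ m := by
      rw [sign_finRotate]
      push_cast
      ring
    rw [hdp, hsign] at hDet
    rw [hDet, Nat.add_sub_cancel]
    rw [← mul_assoc, ← pow_add]
    have : Even (m + m) := ⟨m, rfl⟩
    rw [this.neg_one_pow, one_mul]
  rw [hlast, gmap, moore]
  ring

/-- Let `n ≥ 2` and suppose `f^(n)(Xᵢ) = 0` for all `i`. Then
`g(μ_n(X₁, …, X_h)) = μ_{n−1}(f(X₁), …, f(X_h))`. -/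
theorem gmap_mooreN
    (p e q h n : ℕ) (hp : p.Prime) (he : 1 ≤ e) (hq : q = p ^ e) (hh : 1 ≤ h) (hn : 2 ≤ n)
    (K : Type*) [Field K] [Fintype K] [DecidableEq K] (hK : Fintype.card K = q)
    (R : Type*) [CommRing R] [Algebra K R]
    (π : R) (u : ℕ → R) (X : Fin h → R)
    (hX : ∀ i, (fmap q h π u)^[n] (X i) = 0) :
    gmap q h π (mooreN q h n π u X)
      = mooreN q h (n - 1) π u (fun i => fmap q h π u (X i)) := by
  classical
  rcases subsingleton_or_nontrivial R with hR | hR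
  · exact Subsingleton.elim _ _
  haveI : Fact (Nat.Prime p) := ⟨hp⟩
  haveI : NeZero h := ⟨by omega⟩
  -- characteristic of K is p
  haveI hKp : CharP K p := by
    obtain ⟨m, hrp, hcard⟩ := FiniteField.card K (ringChar K)
    have hpq : p ^ e = ringChar K ^ (m : ℕ) := by rw [← hq, ← hK, hcard]
    have hdvd : p ∣ ringChar K ^ (m : ℕ) := by
      rw [← hpq]
      exact dvd_pow_self p (by omega)
    have := hp.dvd_of_dvd_pow hdvd
    have hpr : p = ringChar K := ((Nat.prime_dvd_prime_iff_eq hp hrp).1 this)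
    rw [hpr]
    exact ringChar.charP K
  haveI : CharP R p := charP_of_injective_algebraMap' K (A := R) p
  haveI : ExpChar R p := .prime hp
  have hphi : ∀ x : R, x ^ q = iterateFrobenius R p e x := fun x => by
    rw [iterateFrobenius_def, ← hq]
  set f := fmap q h π u with hf
  -- additivity of gmap over finite sums
  have gadd : ∀ {ι : Type _} (s : Finset ι) (F : ι → R),
      gmap q h π (∑ x ∈ s, F x) = ∑ x ∈ s, gmap q h π (F x) := by
    intro ι s F
    simp only [gmap]
    rw [Finset.mul_sum, hphi, map_sum, Finset.mul_sum, ← Finset.sum_add_distrib]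
    exact Finset.sum_congr rfl fun x _ => by rw [hphi]
  rw [mooreN, gadd]
  have hlem : ∀ a ∈ Finset.univ.filter
      (fun a : Fin h → Fin n => ∑ i, (a i : ℕ) = (h - 1) * (n - 1)),
      gmap q h π (moore q (fun i => f^[(a i : ℕ)] (X i)))
        = Matrix.det (Matrix.of fun i j : Fin h =>
            if j = 0 then f^[(a i : ℕ) + 1] (X i)
            else (f^[(a i : ℕ)] (X i)) ^ q ^ (j : ℕ)) := by
    intro a _
    rw [lemA p e q h hq π u]
    congr 1
    ext i j
    by_cases hj : j = 0 <;> simp [hj, Function.iterate_succ_apply', hf]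
  rw [Finset.sum_congr rfl hlem]
  rw [mooreN]
  have hn2 : n - 1 - 1 = n - 2 := by omega
  simp only [hn2, moore]
  simp only [Matrix.det_apply]
  rw [Finset.sum_comm]
  conv_rhs => rw [Finset.sum_comm]
  refine Finset.sum_congr rfl fun σ _ => ?_
  rw [← Finset.smul_sum, ← Finset.smul_sum]
  congr 1
  have hkey := keyB (R := R) (h := h) (n := n) hn σ
    (fun i c => (f^[c] (X (σ i))) ^ q ^ (i : ℕ))
    (by simp [hX (σ 0)])
  refine Eq.trans (Finset.sum_congr rfl fun a _ => Finset.prod_congr rfl fun i _ => ?_)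
    (hkey.trans (Finset.sum_congr rfl fun b _ => Finset.prod_congr rfl fun i _ => ?_))
  · by_cases hi : i = 0
    · subst hi
      simp
    · simp only [Matrix.of_apply, if_neg hi, add_zero]
  · simp only [Matrix.of_apply, Function.iterate_succ_apply, hf]
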